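/- Let R be a commutative ring of characteristic p with a p-basis x_1,...,x_n. Then the differentials dx_1,...,dx_n form a free basis of the module of Kähler differentials Ω_{R/R^p} (equivalently of Ω_{R/𝔽_p}) as an R-module. -/

import Mathlib

/-- The image of the Frobenius `r ↦ r^p` of `R`, as a subring. -/
def pPowers (R : Type*) [CommRing R] (p : ℕ) : Subring R :=
  Subring.closure (Set.range fun r : R => r ^ p)

section Aux

variable {p : ℕ} [Fact p.Prime] {R : Type*} [CommRing R] [CharP R p] {n : ℕ}

lemma pPowers.pow_mem (r : R) : r ^ p ∈ pPowers R p :=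
  Subring.subset_closure ⟨r, rfl⟩

lemma subring_smul_def {R : Type*} [CommRing R] (S : Subring R) (s : S) (r : R) :
    s • r = (s : R) * r := by
  rw [Algebra.smul_def]
  rfl

lemma charP_cast_mod (m : ℕ) : ((m % p : ℕ) : R) = (m : R) := by
  conv_rhs => rw [← Nat.mod_add_div m p]
  push_cast
  simp [CharP.cast_eq_zero R p]

lemma exp_eq (p s d : ℕ) (hd : d ≤ s % p) :
    s / p * p + (s % p - d) = s - d := by
  have h2 : s / p * p + s % p = s := Nat.div_add_mod' s p
  generalize s / p * p = Q at h2 ⊢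
  generalize s % p = r at h2 hd ⊢
  omega

lemma prod_pow_mul (x : Fin n → R) (e f : Fin n → ℕ) :
    (∏ j, x j ^ e j) * (∏ j, x j ^ f j) = ∏ j, x j ^ (e j + f j) := by
  rw [← Finset.prod_mul_distrib]
  exact Finset.prod_congr rfl fun j _ => (pow_add _ _ _).symm

lemma key_identity (x : Fin n → R) (i : Fin n) (a b : Fin n → ℕ) :
    ((∏ j, x j ^ ((a j + b j) / p)) ^ p) *
      ((((a i + b i) % p : ℕ) : R) *
        ∏ j, x j ^ ((a j + b j) % p - if j = i then 1 else 0)) =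
    (∏ j, x j ^ a j) * (((b i : ℕ) : R) * ∏ j, x j ^ (b j - if j = i then 1 else 0)) +
    (∏ j, x j ^ b j) * (((a i : ℕ) : R) * ∏ j, x j ^ (a j - if j = i then 1 else 0)) := by
  set M : R := ∏ j, x j ^ (a j + b j - if j = i then 1 else 0) with hM
  have hL : ((∏ j, x j ^ ((a j + b j) / p)) ^ p) *
      ((((a i + b i) % p : ℕ) : R) *
        ∏ j, x j ^ ((a j + b j) % p - if j = i then 1 else 0)) =
      (((a i + b i) % p : ℕ) : R) * M := by
    rcases Nat.eq_zero_or_pos ((a i + b i) % p) with h | h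
    · rw [h]; simp
    · rw [← Finset.prod_pow]
      simp_rw [← pow_mul]
      rw [mul_left_comm, prod_pow_mul]
      congr 1
      apply Finset.prod_congr rfl
      intro j _
      congr 1
      by_cases hj : j = i
      · subst hj
        have ht : (if j = j then 1 else 0) = 1 := if_pos rfl
        rw [ht]
        exact exp_eq p _ 1 h
      · simp only [if_neg hj]
        exact exp_eq p _ 0 (Nat.zero_le _)
  rw [hL, charP_cast_mod]
  have hR1 : (∏ j, x j ^ a j) *
      (((b i : ℕ) : R) * ∏ j, x j ^ (b j - if j = i then 1 else 0)) =
      ((b i : ℕ) : R) * M := by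
    rcases Nat.eq_zero_or_pos (b i) with h | h
    · rw [h]; simp
    · rw [mul_left_comm, prod_pow_mul]
      congr 1
      apply Finset.prod_congr rfl
      intro j _
      congr 1
      by_cases hj : j = i
      · subst hj
        have ht : (if j = j then 1 else 0) = 1 := if_pos rfl
        rw [ht]
        omega
      · simp only [if_neg hj]; omega
  have hR2 : (∏ j, x j ^ b j) *
      (((a i : ℕ) : R) * ∏ j, x j ^ (a j - if j = i then 1 else 0)) =
      ((a i : ℕ) : R) * M := by
    rcases Nat.eq_zero_or_pos (a i) with h | h
    · rw [h]; simp
    · rw [mul_left_comm, prod_pow_mul]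
      congr 1
      apply Finset.prod_congr rfl
      intro j _
      congr 1
      by_cases hj : j = i
      · subst hj
        have ht : (if j = j then 1 else 0) = 1 := if_pos rfl
        rw [ht]
        omega
      · simp only [if_neg hj]; omega
  rw [hR1, hR2]
  push_cast
  ring

lemma exists_pDerivation (x : Fin n → R)
    (B : Module.Basis (Fin n → Fin p) (pPowers R p) R)
    (hB : ∀ c, B c = ∏ j, x j ^ ((c j : ℕ))) (i : Fin n) :
    ∃ D : Derivation (pPowers R p) R R,
      ∀ c : Fin n → Fin p,
        D (B c) = ((c i : ℕ) : R) *
          ∏ j, x j ^ ((c j : ℕ) - if j = i then 1 else 0) := by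
  classical
  have hp : p.Prime := Fact.out
  haveI : NeZero p := ⟨hp.ne_zero⟩
  set v : (Fin n → Fin p) → R := fun c =>
    ((c i : ℕ) : R) * ∏ j, x j ^ ((c j : ℕ) - if j = i then 1 else 0) with hv
  let Dl : R →ₗ[pPowers R p] R := B.constr ℕ v
  have hDl : ∀ c, Dl (B c) = v c := fun c => B.constr_basis ℕ v c
  have hmul : ∀ a b : Fin n → Fin p,
      (B a) * (B b) =
      (⟨(∏ j, x j ^ (((a j : ℕ) + (b j : ℕ)) / p)) ^ p, pPowers.pow_mem _⟩ :
          pPowers R p) •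
        B (fun j => ⟨((a j : ℕ) + (b j : ℕ)) % p, Nat.mod_lt _ hp.pos⟩) := by
    intro a b
    have hYc : (((⟨(∏ j, x j ^ (((a j : ℕ) + (b j : ℕ)) / p)) ^ p,
        pPowers.pow_mem _⟩ : pPowers R p)) : R) =
        ∏ j, x j ^ ((((a j : ℕ) + (b j : ℕ)) / p) * p) := by
      show (∏ j, x j ^ (((a j : ℕ) + (b j : ℕ)) / p)) ^ p = _
      rw [← Finset.prod_pow]
      simp_rw [← pow_mul]
    rw [hB, hB, hB, subring_smul_def, prod_pow_mul, hYc, prod_pow_mul]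
    apply Finset.prod_congr rfl
    intro j _
    congr 1
    simp only [Fin.val_mk]
    exact (Nat.div_add_mod' _ _).symm
  have leib : ∀ f g : R, Dl (f * g) = f * Dl g + g * Dl f := by
    have h : (LinearMap.mul (pPowers R p) R).compr₂ Dl =
        (LinearMap.mul (pPowers R p) R).compl₂ Dl +
          (LinearMap.mul (pPowers R p) R).comp Dl := by
      apply B.ext; intro a
      apply B.ext; intro b
      simp only [LinearMap.compr₂_apply, LinearMap.compl₂_apply, LinearMap.add_apply,
        LinearMap.comp_apply, LinearMap.mul_apply']
      rw [hmul a b, map_smul, hDl, hDl, hDl, subring_smul_def]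
      rw [hB, hB]
      have key := key_identity (p := p) x i (fun j => (a j : ℕ)) (fun j => (b j : ℕ))
      simp only [hv, Fin.val_mk]
      rw [mul_comm (((a i : ℕ) : R) * _) (∏ j, x j ^ ((b j : ℕ)))]
      exact key
    intro f g
    have := LinearMap.congr_fun (LinearMap.congr_fun h f) g
    simpa [mul_comm] using this
  have hone : Dl 1 = 0 := by
    have h1 : B 0 = 1 := by rw [hB]; simp
    rw [← h1, hDl]
    simp [hv]
  refine ⟨⟨Dl, hone, fun a b => ?_⟩, fun c => hDl c⟩
  simpa [smul_eq_mul] using leib a b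

end Aux

/-- Let `R` be a commutative ring of characteristic `p` with a `p`-basis `x_1, …, x_n`
(the monomials `x^b`, `0 ≤ b_i ≤ p−1`, form a free `R^p`-module basis of `R`).
Then the differentials `dx_1, …, dx_n` form a free basis of the module of Kähler
differentials `Ω_{R/R^p}` as an `R`-module. -/
theorem pBasis_gives_differential_basis (p : ℕ) [Fact p.Prime]
    {R : Type*} [CommRing R] [CharP R p] (n : ℕ) (x : Fin n → R)
    (hind : LinearIndependent (pPowers R p)
      (fun b : Fin n → Fin p => ∏ i, x i ^ ((b i : ℕ))))
    (hspan : Submodule.span (pPowers R p)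
      (Set.range fun b : Fin n → Fin p => ∏ i, x i ^ ((b i : ℕ))) = ⊤) :
    LinearIndependent R (fun i : Fin n => KaehlerDifferential.D (pPowers R p) R (x i)) ∧
    Submodule.span R
      (Set.range fun i : Fin n => KaehlerDifferential.D (pPowers R p) R (x i)) = ⊤ := by
  classical
  have hp : p.Prime := Fact.out
  haveI : NeZero p := ⟨hp.ne_zero⟩
  let B : Module.Basis (Fin n → Fin p) (pPowers R p) R := Module.Basis.mk hind (ge_of_eq hspan)
  have hB : ∀ c, B c = ∏ j, x j ^ ((c j : ℕ)) := fun c => Module.Basis.mk_apply _ _ _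
  choose D hD using fun i => exists_pDerivation x B hB i
  have hm1 : 1 % p = 1 := Nat.mod_eq_of_lt hp.one_lt
  have hval1 : ((1 : Fin p) : ℕ) = 1 := by
    rw [Fin.val_one']
    exact hm1
  let e : Fin n → (Fin n → Fin p) := fun i k => if k = i then 1 else 0
  have he : ∀ i, B (e i) = x i := by
    intro i
    rw [hB]
    rw [Finset.prod_eq_single i]
    · simp [e, hval1, hm1]
    · intro j _ hj
      simp [e, hj]
    · intro h
      exact absurd (Finset.mem_univ i) h
  have hDx : ∀ i j, D i (x j) = if i = j then 1 else 0 := by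
    intro i j
    rw [← he j, hD]
    by_cases hij : i = j
    · subst hij
      rw [if_pos rfl]
      have h1 : ((e i i : ℕ) : R) = 1 := by simp [e, hval1, hm1]
      rw [h1, one_mul]
      apply Finset.prod_eq_one
      intro k _
      by_cases hk : k = i
      · subst hk; simp [e, hval1, hm1]
      · simp [e, hk]
    · rw [if_neg hij]
      have h0 : ((e j i : ℕ) : R) = 0 := by
        simp [e, if_neg hij]
      rw [h0, zero_mul]
  constructor
  · rw [Fintype.linearIndependent_iff]
    intro g hg j
    have h := congrArg ((D j).liftKaehlerDifferential) hg
    simp only [map_sum, map_smul, map_zero,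
      Derivation.liftKaehlerDifferential_comp_D, smul_eq_mul, hDx] at h
    simpa using h
  · rw [eq_top_iff, ← KaehlerDifferential.span_range_derivation, Submodule.span_le]
    rintro _ ⟨r, rfl⟩
    set N := Submodule.span R
      (Set.range fun i : Fin n => KaehlerDifferential.D (pPowers R p) R (x i)) with hN
    show KaehlerDifferential.D (pPowers R p) R r ∈ N
    have hxm : ∀ i, KaehlerDifferential.D (pPowers R p) R (x i) ∈ N :=
      fun i => Submodule.subset_span ⟨i, rfl⟩
    have hmulmem : ∀ a b : R, KaehlerDifferential.D (pPowers R p) R a ∈ N →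
        KaehlerDifferential.D (pPowers R p) R b ∈ N →
        KaehlerDifferential.D (pPowers R p) R (a * b) ∈ N := by
      intro a b ha hb
      rw [Derivation.leibniz]
      exact N.add_mem (N.smul_mem a hb) (N.smul_mem b ha)
    have honem : KaehlerDifferential.D (pPowers R p) R 1 ∈ N := by
      rw [Derivation.map_one_eq_zero]; exact N.zero_mem
    have hpow : ∀ i k, KaehlerDifferential.D (pPowers R p) R (x i ^ k) ∈ N := by
      intro i k
      induction k with
      | zero => simpa using honem
      | succ k ih => rw [pow_succ]; exact hmulmem _ _ ih (hxm i)
    have hr : r ∈ Submodule.span (pPowers R p)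
        (Set.range fun b : Fin n → Fin p => ∏ i, x i ^ ((b i : ℕ))) :=
      hspan ▸ Submodule.mem_top
    induction hr using Submodule.span_induction with
    | mem y hy =>
      obtain ⟨c, rfl⟩ := hy
      exact Finset.prod_induction _
        (fun y => KaehlerDifferential.D (pPowers R p) R y ∈ N)
        (fun a b ha hb => hmulmem a b ha hb) honem (fun j _ => hpow j _)
    | zero => rw [map_zero]; exact N.zero_mem
    | add a b ha hb iha ihb => rw [map_add]; exact N.add_mem iha ihb
    | smul s a ha iha =>
      rw [Derivation.map_smul]
      rw [← algebraMap_smul R s (KaehlerDifferential.D (pPowers R p) R a)]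
      exact N.smul_mem _ iha
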